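/- Let the logarithmic reduction data depend differentiably on (x,t) ∈ ℝ² (′ denotes ∂/∂x, subscript t denotes ∂/∂t), and suppose the string equation holds for every (x,t). Fix j ∈ {0,1,…,n+1}, define F⁰_w := r, F⁰_x := r′w + u′/2, and for j ≥ 1, F^j_w := 1/(w − w_j), F^j_x := w_j′/(w_j − w) + (1/2)(r′/r − w_j′/w_j), and assume the τ_j-flow equations hold: for every (x,t) and every admissible w, r_t w + u_t + Σᵢ aᵢ w_{i,t}/(wᵢ − w) = w·F^j_w·Z_x − w·F^j_x·Z_w and r_t/w + ū_t + Σᵢ āᵢ w̄_{i,t}/(w̄ᵢ − 1/w) = w·F^j_w·Z̄_x − w·F^j_x·Z̄_w. Then ū_t + Σ_l ā_l w̄_{l,t}/w̄_l = δ_{j,0}, and for every k ∈ {1,…,n+1}: a_k·[ r_t/w_k − r·w_{k,t}/w_k² + ū_t + Σ_l ā_l·(w̄_{l,t} + w_{k,t}/w_k²)/(w̄_l − 1/w_k) ] = δ_{j,k}. (That is, ∂_{τ_j} I_k = δ_{jk} for the linearizing variables I₀ = ū + Σ ā_l log w̄_l and I_k = a_k·z̄ evaluated at 1/w = 1/w_k.)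 -/

import Mathlib

open Finset
open Filter Topology

private lemma limeq {p L₁ L₂ : ℂ} {f g : ℂ → ℂ}
    (hf : Filter.Tendsto f (𝓝[≠] p) (𝓝 L₁))
    (hg : Filter.Tendsto g (𝓝[≠] p) (𝓝 L₂))
    (hfg : ∀ᶠ w in 𝓝[≠] p, f w = g w) : L₁ = L₂ :=
  tendsto_nhds_unique hf (hg.congr' (hfg.mono fun _ h => h.symm))

set_option maxHeartbeats 2000000 in
/-- for the logarithmic reduction evolving under the `τ_j`-flow and
constrained by the string equation, the linearizing variables
`I₀ = ū + Σ ā_l log w̄_l` and `I_k = a_k·z̄(1/w_k)` satisfy `∂_{τ_j} I_k = δ_{jk}`. -/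
theorem tau_flow_linearizing_variables_I
    (n : ℕ) (a abar : ℕ → ℂ)
    (r u ubar : ℝ → ℝ → ℂ) (W Wb : ℕ → ℝ → ℝ → ℂ)
    -- ∂/∂x and ∂/∂t of the data
    (rx ux ubarx rt ut ubart : ℝ → ℝ → ℂ) (Wx Wbx Wt Wbt : ℕ → ℝ → ℝ → ℂ)
    (ha : ∀ i ∈ Finset.Icc 1 (n + 1), a i ≠ 0)
    (habar : ∀ i ∈ Finset.Icc 1 (n + 1), abar i ≠ 0)
    (hasum : ∑ i ∈ Finset.Icc 1 (n + 1), a i = 0)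
    (habarsum : ∑ i ∈ Finset.Icc 1 (n + 1), abar i = 0)
    (hr0 : ∀ x t : ℝ, r x t ≠ 0)
    (hW0 : ∀ i ∈ Finset.Icc 1 (n + 1), ∀ x t : ℝ, W i x t ≠ 0)
    (hWb0 : ∀ i ∈ Finset.Icc 1 (n + 1), ∀ x t : ℝ, Wb i x t ≠ 0)
    (hWdist : ∀ i ∈ Finset.Icc 1 (n + 1), ∀ j ∈ Finset.Icc 1 (n + 1), i ≠ j →
      ∀ x t : ℝ, W i x t ≠ W j x t)
    (hWbdist : ∀ i ∈ Finset.Icc 1 (n + 1), ∀ j ∈ Finset.Icc 1 (n + 1), i ≠ j →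
      ∀ x t : ℝ, Wb i x t ≠ Wb j x t)
    (hWWb : ∀ i ∈ Finset.Icc 1 (n + 1), ∀ j ∈ Finset.Icc 1 (n + 1),
      ∀ x t : ℝ, W i x t * Wb j x t ≠ 1)
    (hdrx : ∀ x t, HasDerivAt (fun y => r y t) (rx x t) x)
    (hdrt : ∀ x t, HasDerivAt (fun s => r x s) (rt x t) t)
    (hdux : ∀ x t, HasDerivAt (fun y => u y t) (ux x t) x)
    (hdut : ∀ x t, HasDerivAt (fun s => u x s) (ut x t) t)
    (hdubarx : ∀ x t, HasDerivAt (fun y => ubar y t) (ubarx x t) x)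
    (hdubart : ∀ x t, HasDerivAt (fun s => ubar x s) (ubart x t) t)
    (hdWx : ∀ i ∈ Finset.Icc 1 (n + 1), ∀ x t, HasDerivAt (fun y => W i y t) (Wx i x t) x)
    (hdWt : ∀ i ∈ Finset.Icc 1 (n + 1), ∀ x t, HasDerivAt (fun s => W i x s) (Wt i x t) t)
    (hdWbx : ∀ i ∈ Finset.Icc 1 (n + 1), ∀ x t, HasDerivAt (fun y => Wb i y t) (Wbx i x t) x)
    (hdWbt : ∀ i ∈ Finset.Icc 1 (n + 1), ∀ x t, HasDerivAt (fun s => Wb i x s) (Wbt i x t) t)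
    -- the rational (in w) partial derivatives of z and z̄
    (Zw Zx Zbw Zbx : ℝ → ℝ → ℂ → ℂ)
    (hZw : ∀ x t w, Zw x t w = r x t + ∑ i ∈ Finset.Icc 1 (n + 1), a i / (w - W i x t))
    (hZx : ∀ x t w, Zx x t w =
      rx x t * w + ux x t + ∑ i ∈ Finset.Icc 1 (n + 1), a i * Wx i x t / (W i x t - w))
    (hZbw : ∀ x t w, Zbw x t w =
      - r x t / w ^ 2 + ∑ i ∈ Finset.Icc 1 (n + 1), abar i / (w ^ 2 * (Wb i x t - 1 / w)))
    (hZbx : ∀ x t w, Zbx x t w =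
      rx x t / w + ubarx x t
        + ∑ i ∈ Finset.Icc 1 (n + 1), abar i * Wbx i x t / (Wb i x t - 1 / w))
    -- the string equation
    (hstring : ∀ (x t : ℝ) (w : ℂ), w ≠ 0 → (∀ j ∈ Finset.Icc 1 (n + 1), w ≠ W j x t) →
      (∀ j ∈ Finset.Icc 1 (n + 1), w ≠ (Wb j x t)⁻¹) →
      w * Zw x t w * Zbx x t w - w * Zx x t w * Zbw x t w = 1)
    -- the fixed index j and the derivatives F^j of the evolution function 𝓗_j
    (j : ℕ) (hj : j ≤ n + 1)
    (Fw Fx : ℝ → ℝ → ℂ → ℂ)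
    (hFw : ∀ x t w, Fw x t w = if j = 0 then r x t else (w - W j x t)⁻¹)
    (hFx : ∀ x t w, Fx x t w = if j = 0 then rx x t * w + ux x t / 2 else
      Wx j x t / (W j x t - w) + (1 / 2) * (rx x t / r x t - Wx j x t / W j x t))
    -- the τ_j-flow equations for z and z̄
    (hflowz : ∀ (x t : ℝ) (w : ℂ), w ≠ 0 → (∀ i ∈ Finset.Icc 1 (n + 1), w ≠ W i x t) →
      (∀ i ∈ Finset.Icc 1 (n + 1), w ≠ (Wb i x t)⁻¹) →
      rt x t * w + ut x t + ∑ i ∈ Finset.Icc 1 (n + 1), a i * Wt i x t / (W i x t - w)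
        = w * Fw x t w * Zx x t w - w * Fx x t w * Zw x t w)
    (hflowzbar : ∀ (x t : ℝ) (w : ℂ), w ≠ 0 → (∀ i ∈ Finset.Icc 1 (n + 1), w ≠ W i x t) →
      (∀ i ∈ Finset.Icc 1 (n + 1), w ≠ (Wb i x t)⁻¹) →
      rt x t / w + ubart x t
          + ∑ i ∈ Finset.Icc 1 (n + 1), abar i * Wbt i x t / (Wb i x t - 1 / w)
        = w * Fw x t w * Zbx x t w - w * Fx x t w * Zbw x t w) :
    ∀ x t : ℝ,
      (ubart x t + ∑ l ∈ Finset.Icc 1 (n + 1), abar l * Wbt l x t / Wb l x t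
        = if j = 0 then 1 else 0) ∧
      ∀ k ∈ Finset.Icc 1 (n + 1),
        a k * (rt x t / W k x t - r x t * Wt k x t / (W k x t) ^ 2 + ubart x t
          + ∑ l ∈ Finset.Icc 1 (n + 1),
              abar l * (Wbt l x t + Wt k x t / (W k x t) ^ 2) / (Wb l x t - 1 / W k x t))
          = if j = k then 1 else 0 := by
  
  intro x t
  have hrne : r x t ≠ 0 := hr0 x t
  constructor
  · -- ========== Part 1: the I₀ equation, via limits at w = ∞ (v = 1/w → 0) ==========
    have hid0 : Tendsto (fun v : ℂ => v) (𝓝[≠] (0:ℂ)) (𝓝 0) :=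
      tendsto_id.mono_left nhdsWithin_le_nhds
    have hvne : ∀ᶠ v in 𝓝[≠] (0:ℂ), v ≠ 0 := eventually_mem_nhdsWithin
    have hvW : ∀ᶠ v in 𝓝[≠] (0:ℂ), ∀ i ∈ Finset.Icc 1 (n+1), v ≠ (W i x t)⁻¹ := by
      rw [Filter.eventually_all_finset]
      intro i hi
      exact (eventually_ne_nhds (Ne.symm (inv_ne_zero (hW0 i hi x t)))).filter_mono
        nhdsWithin_le_nhds
    have hvWb : ∀ᶠ v in 𝓝[≠] (0:ℂ), ∀ i ∈ Finset.Icc 1 (n+1), v ≠ Wb i x t := by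
      rw [Filter.eventually_all_finset]
      intro i hi
      exact (eventually_ne_nhds (Ne.symm (hWb0 i hi x t))).filter_mono nhdsWithin_le_nhds
    have hpre : ∀ᶠ v in 𝓝[≠] (0:ℂ), v ≠ 0 ∧ v⁻¹ ≠ 0 ∧
        (∀ i ∈ Finset.Icc 1 (n+1), v⁻¹ ≠ W i x t) ∧
        (∀ i ∈ Finset.Icc 1 (n+1), v⁻¹ ≠ (Wb i x t)⁻¹) ∧
        (∀ i ∈ Finset.Icc 1 (n+1), 1 - W i x t * v ≠ 0) ∧
        (∀ i ∈ Finset.Icc 1 (n+1), Wb i x t - v ≠ 0) := by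
      filter_upwards [hvne, hvW, hvWb] with v h0 hW' hWb'
      refine ⟨h0, inv_ne_zero h0, ?_, ?_, ?_, ?_⟩
      · intro i hi h; exact hW' i hi (by rw [← h, inv_inv])
      · intro i hi h; exact hWb' i hi (by rw [← inv_inv v, h, inv_inv])
      · intro i hi h
        exact hW' i hi (eq_inv_of_mul_eq_one_left (by linear_combination -h))
      · intro i hi h; exact hWb' i hi (by linear_combination -h)
    have evZw : ∀ᶠ v in 𝓝[≠] (0:ℂ), Zw x t v⁻¹ =
        r x t + ∑ i ∈ Finset.Icc 1 (n+1), a i * v / (1 - W i x t * v) := by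
      filter_upwards [hpre] with v hv
      obtain ⟨h0, h1, h2, h3, h4, h5⟩ := hv
      rw [hZw]
      congr 1
      refine Finset.sum_congr rfl fun i hi => ?_
      rw [div_eq_div_iff (sub_ne_zero.mpr (h2 i hi)) (h4 i hi)]
      field_simp
    have evZx : ∀ᶠ v in 𝓝[≠] (0:ℂ), Zx x t v⁻¹ =
        rx x t * v⁻¹ + ux x t +
          ∑ i ∈ Finset.Icc 1 (n+1), -(a i * Wx i x t * v) / (1 - W i x t * v) := by
      filter_upwards [hpre] with v hv
      obtain ⟨h0, h1, h2, h3, h4, h5⟩ := hv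
      rw [hZx]
      congr 1
      refine Finset.sum_congr rfl fun i hi => ?_
      rw [div_eq_div_iff (sub_ne_zero.mpr (fun h => (h2 i hi) h.symm)) (h4 i hi)]
      field_simp
      ring
    have evZbw : ∀ᶠ v in 𝓝[≠] (0:ℂ), Zbw x t v⁻¹ =
        v^2 * (-r x t + ∑ i ∈ Finset.Icc 1 (n+1), abar i / (Wb i x t - v)) := by
      filter_upwards [hpre] with v hv
      obtain ⟨h0, h1, h2, h3, h4, h5⟩ := hv
      rw [hZbw]
      simp only [div_inv_eq_mul, one_mul, inv_inv]
      rw [mul_add, Finset.mul_sum]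
      congr 1
      · rw [show ((v:ℂ)⁻¹)^2 = (v^2)⁻¹ by rw [inv_pow], div_inv_eq_mul]
        ring
      · refine Finset.sum_congr rfl fun i hi => ?_
        rw [← mul_div_assoc,
          div_eq_div_iff (mul_ne_zero (pow_ne_zero 2 h1) (h5 i hi)) (h5 i hi)]
        field_simp
    have evZbx : ∀ᶠ v in 𝓝[≠] (0:ℂ), Zbx x t v⁻¹ =
        rx x t * v + ubarx x t +
          ∑ i ∈ Finset.Icc 1 (n+1), abar i * Wbx i x t / (Wb i x t - v) := by
      filter_upwards [hpre] with v hv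
      rw [hZbx]
      simp only [div_inv_eq_mul, one_mul, inv_inv]
    have evS : ∀ᶠ v in 𝓝[≠] (0:ℂ),
        (r x t + ∑ i ∈ Finset.Icc 1 (n+1), a i * v / (1 - W i x t * v)) *
          ((rx x t * v + ubarx x t +
            ∑ i ∈ Finset.Icc 1 (n+1), abar i * Wbx i x t / (Wb i x t - v)) / v)
        = 1 + (rx x t + v * (ux x t +
            ∑ i ∈ Finset.Icc 1 (n+1), -(a i * Wx i x t * v) / (1 - W i x t * v))) *
            (-r x t + ∑ i ∈ Finset.Icc 1 (n+1), abar i / (Wb i x t - v)) := by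
      filter_upwards [hpre, evZw, evZx, evZbw, evZbx] with v hv e1 e2 e3 e4
      obtain ⟨h0, h1, h2, h3, h4, h5⟩ := hv
      have hs := hstring x t v⁻¹ h1 h2 h3
      rw [e1, e2, e3, e4] at hs
      set X := rx x t * v + ubarx x t +
        ∑ i ∈ Finset.Icc 1 (n+1), abar i * Wbx i x t / (Wb i x t - v) with hX
      set Y := -r x t + ∑ i ∈ Finset.Icc 1 (n+1), abar i / (Wb i x t - v) with hY
      set G := X / v with hG
      have hXv : X = v * G := by rw [hG]; field_simp
      rw [hXv] at hs
      apply mul_left_cancel₀ (pow_ne_zero 3 h0)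
      linear_combination (norm := skip) v ^ 3 * hs
      field_simp
      ring
    have hPT : Tendsto (fun v => r x t + ∑ i ∈ Finset.Icc 1 (n+1), a i * v / (1 - W i x t * v))
        (𝓝[≠] (0:ℂ)) (𝓝 (r x t)) := by
      have h' : Tendsto (fun v : ℂ => r x t +
          ∑ i ∈ Finset.Icc 1 (n+1), a i * v / (1 - W i x t * v)) (𝓝[≠] (0:ℂ))
          (𝓝 (r x t + ∑ i ∈ Finset.Icc 1 (n+1), a i * 0 / (1 - W i x t * 0))) :=
        tendsto_const_nhds.add (tendsto_finset_sum _ fun i _ =>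
          (tendsto_const_nhds.mul hid0).div
            (tendsto_const_nhds.sub (tendsto_const_nhds.mul hid0)) (by norm_num))
      simpa using h'
    have hPne : ∀ᶠ v in 𝓝[≠] (0:ℂ),
        (r x t + ∑ i ∈ Finset.Icc 1 (n+1), a i * v / (1 - W i x t * v)) ≠ 0 :=
      hPT.eventually_ne hrne
    have hYT : Tendsto (fun v => -r x t + ∑ i ∈ Finset.Icc 1 (n+1), abar i / (Wb i x t - v))
        (𝓝[≠] (0:ℂ)) (𝓝 (-r x t + ∑ i ∈ Finset.Icc 1 (n+1), abar i / Wb i x t)) := by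
      have h' : Tendsto (fun v : ℂ => -r x t +
          ∑ i ∈ Finset.Icc 1 (n+1), abar i / (Wb i x t - v)) (𝓝[≠] (0:ℂ))
          (𝓝 (-r x t + ∑ i ∈ Finset.Icc 1 (n+1), abar i / (Wb i x t - 0))) :=
        tendsto_const_nhds.add (tendsto_finset_sum _ fun i hi =>
          tendsto_const_nhds.div (tendsto_const_nhds.sub hid0)
            (by simpa using hWb0 i hi x t))
      simpa using h'
    have hRT : Tendsto (fun v => ux x t +
        ∑ i ∈ Finset.Icc 1 (n+1), -(a i * Wx i x t * v) / (1 - W i x t * v))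
        (𝓝[≠] (0:ℂ)) (𝓝 (ux x t)) := by
      have h' : Tendsto (fun v : ℂ => ux x t +
          ∑ i ∈ Finset.Icc 1 (n+1), -(a i * Wx i x t * v) / (1 - W i x t * v)) (𝓝[≠] (0:ℂ))
          (𝓝 (ux x t + ∑ i ∈ Finset.Icc 1 (n+1), -(a i * Wx i x t * 0) / (1 - W i x t * 0))) :=
        tendsto_const_nhds.add (tendsto_finset_sum _ fun i _ =>
          (tendsto_const_nhds.mul hid0).neg.div
            (tendsto_const_nhds.sub (tendsto_const_nhds.mul hid0)) (by norm_num))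
      simpa using h'
    have evg : ∀ᶠ v in 𝓝[≠] (0:ℂ),
        (rx x t * v + ubarx x t +
          ∑ i ∈ Finset.Icc 1 (n+1), abar i * Wbx i x t / (Wb i x t - v)) / v
        = (1 + (rx x t + v * (ux x t +
            ∑ i ∈ Finset.Icc 1 (n+1), -(a i * Wx i x t * v) / (1 - W i x t * v))) *
            (-r x t + ∑ i ∈ Finset.Icc 1 (n+1), abar i / (Wb i x t - v))) /
          (r x t + ∑ i ∈ Finset.Icc 1 (n+1), a i * v / (1 - W i x t * v)) := by
      filter_upwards [evS, hPne] with v h1 h2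
      rw [eq_div_iff h2]
      linear_combination h1
    have hgT : Tendsto (fun v => (rx x t * v + ubarx x t +
        ∑ i ∈ Finset.Icc 1 (n+1), abar i * Wbx i x t / (Wb i x t - v)) / v)
        (𝓝[≠] (0:ℂ))
        (𝓝 ((1 + rx x t * (-r x t + ∑ i ∈ Finset.Icc 1 (n+1), abar i / Wb i x t)) / r x t)) := by
      have hbase : Tendsto (fun v => (1 + (rx x t + v * (ux x t +
          ∑ i ∈ Finset.Icc 1 (n+1), -(a i * Wx i x t * v) / (1 - W i x t * v))) *
          (-r x t + ∑ i ∈ Finset.Icc 1 (n+1), abar i / (Wb i x t - v))) /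
          (r x t + ∑ i ∈ Finset.Icc 1 (n+1), a i * v / (1 - W i x t * v)))
          (𝓝[≠] (0:ℂ))
          (𝓝 ((1 + (rx x t + 0 * ux x t) *
            (-r x t + ∑ i ∈ Finset.Icc 1 (n+1), abar i / Wb i x t)) / r x t)) :=
        (tendsto_const_nhds.add
          ((tendsto_const_nhds.add (hid0.mul hRT)).mul hYT)).div hPT hrne
      have h2 := hbase.congr' (evg.mono fun _ h => h.symm)
      simpa using h2
    have hXT0 : Tendsto (fun v => rx x t * v + ubarx x t +
        ∑ i ∈ Finset.Icc 1 (n+1), abar i * Wbx i x t / (Wb i x t - v))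
        (𝓝[≠] (0:ℂ)) (𝓝 0) := by
      have h1 : ∀ᶠ v in 𝓝[≠] (0:ℂ), v * ((rx x t * v + ubarx x t +
          ∑ i ∈ Finset.Icc 1 (n+1), abar i * Wbx i x t / (Wb i x t - v)) / v)
          = rx x t * v + ubarx x t +
            ∑ i ∈ Finset.Icc 1 (n+1), abar i * Wbx i x t / (Wb i x t - v) := by
        filter_upwards [hvne] with v h0
        field_simp
      have := (hid0.mul hgT).congr' h1
      simpa using this
    have hLT : Tendsto (fun v => rt x t * v + ubart x t +
        ∑ i ∈ Finset.Icc 1 (n+1), abar i * Wbt i x t / (Wb i x t - v))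
        (𝓝[≠] (0:ℂ))
        (𝓝 (ubart x t + ∑ l ∈ Finset.Icc 1 (n+1), abar l * Wbt l x t / Wb l x t)) := by
      have h' : Tendsto (fun v : ℂ => rt x t * v + ubart x t +
          ∑ i ∈ Finset.Icc 1 (n+1), abar i * Wbt i x t / (Wb i x t - v)) (𝓝[≠] (0:ℂ))
          (𝓝 (rt x t * 0 + ubart x t +
            ∑ i ∈ Finset.Icc 1 (n+1), abar i * Wbt i x t / (Wb i x t - 0))) :=
        ((tendsto_const_nhds.mul hid0).add tendsto_const_nhds).add
          (tendsto_finset_sum _ fun i hi =>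
            tendsto_const_nhds.div (tendsto_const_nhds.sub hid0)
              (by simpa using hWb0 i hi x t))
      simpa using h'
    by_cases hj0 : j = 0
    · rw [if_pos hj0]
      have evF : ∀ᶠ v in 𝓝[≠] (0:ℂ),
          rt x t * v + ubart x t +
            ∑ i ∈ Finset.Icc 1 (n+1), abar i * Wbt i x t / (Wb i x t - v)
          = r x t * ((rx x t * v + ubarx x t +
              ∑ i ∈ Finset.Icc 1 (n+1), abar i * Wbx i x t / (Wb i x t - v)) / v)
            - (rx x t + ux x t / 2 * v) *
              (-r x t + ∑ i ∈ Finset.Icc 1 (n+1), abar i / (Wb i x t - v)) := by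
        filter_upwards [hpre, evZbw, evZbx] with v hv e3 e4
        obtain ⟨h0, h1, h2, h3, h4, h5⟩ := hv
        have hfb := hflowzbar x t v⁻¹ h1 h2 h3
        rw [hFw, hFx, if_pos hj0, if_pos hj0, e3, e4] at hfb
        simp only [div_inv_eq_mul, one_mul, inv_inv] at hfb
        set X := rx x t * v + ubarx x t +
          ∑ i ∈ Finset.Icc 1 (n+1), abar i * Wbx i x t / (Wb i x t - v) with hX
        set Y := -r x t + ∑ i ∈ Finset.Icc 1 (n+1), abar i / (Wb i x t - v) with hY
        set G := X / v with hG
        have hXv : X = v * G := by rw [hG]; field_simp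
        rw [hXv] at hfb
        apply mul_left_cancel₀ (pow_ne_zero 3 h0)
        linear_combination (norm := skip) v ^ 3 * hfb
        field_simp
        ring
      have hR : Tendsto (fun v => r x t * ((rx x t * v + ubarx x t +
          ∑ i ∈ Finset.Icc 1 (n+1), abar i * Wbx i x t / (Wb i x t - v)) / v)
          - (rx x t + ux x t / 2 * v) *
            (-r x t + ∑ i ∈ Finset.Icc 1 (n+1), abar i / (Wb i x t - v)))
          (𝓝[≠] (0:ℂ))
          (𝓝 (r x t * ((1 + rx x t *
              (-r x t + ∑ i ∈ Finset.Icc 1 (n+1), abar i / Wb i x t)) / r x t)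
            - rx x t * (-r x t + ∑ i ∈ Finset.Icc 1 (n+1), abar i / Wb i x t))) := by
        have h' : Tendsto (fun v => r x t * ((rx x t * v + ubarx x t +
            ∑ i ∈ Finset.Icc 1 (n+1), abar i * Wbx i x t / (Wb i x t - v)) / v)
            - (rx x t + ux x t / 2 * v) *
              (-r x t + ∑ i ∈ Finset.Icc 1 (n+1), abar i / (Wb i x t - v)))
            (𝓝[≠] (0:ℂ))
            (𝓝 (r x t * ((1 + rx x t *
                (-r x t + ∑ i ∈ Finset.Icc 1 (n+1), abar i / Wb i x t)) / r x t)
              - (rx x t + ux x t / 2 * 0) *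
                (-r x t + ∑ i ∈ Finset.Icc 1 (n+1), abar i / Wb i x t))) :=
          (tendsto_const_nhds.mul hgT).sub
            ((tendsto_const_nhds.add (tendsto_const_nhds.mul hid0)).mul hYT)
        simpa using h'
      have hfin := limeq hLT hR evF
      rw [hfin, mul_div_cancel₀ _ hrne]
      ring
    · rw [if_neg hj0]
      have hjmem : j ∈ Finset.Icc 1 (n+1) :=
        Finset.mem_Icc.mpr ⟨Nat.one_le_iff_ne_zero.mpr hj0, hj⟩
      have evF : ∀ᶠ v in 𝓝[≠] (0:ℂ),
          (rt x t * v + ubart x t +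
            ∑ i ∈ Finset.Icc 1 (n+1), abar i * Wbt i x t / (Wb i x t - v)) *
            (1 - W j x t * v)
          = (rx x t * v + ubarx x t +
              ∑ i ∈ Finset.Icc 1 (n+1), abar i * Wbx i x t / (Wb i x t - v))
            - (-(Wx j x t * v) + (1 / 2) * (rx x t / r x t - Wx j x t / W j x t) *
                (1 - W j x t * v)) *
              (v * (-r x t + ∑ i ∈ Finset.Icc 1 (n+1), abar i / (Wb i x t - v))) := by
        filter_upwards [hpre, evZbw, evZbx] with v hv e3 e4
        obtain ⟨h0, h1, h2, h3, h4, h5⟩ := hv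
        have hfb := hflowzbar x t v⁻¹ h1 h2 h3
        rw [hFw, hFx, if_neg hj0, if_neg hj0, e3, e4] at hfb
        simp only [div_inv_eq_mul, one_mul, inv_inv] at hfb
        have hd3 : v⁻¹ - W j x t ≠ 0 := sub_ne_zero.mpr (h2 j hjmem)
        have hd4 : W j x t - v⁻¹ ≠ 0 := fun h => hd3 (by linear_combination -h)
        have e5 : (v⁻¹ - W j x t)⁻¹ = v / (1 - W j x t * v) := by
          rw [inv_eq_one_div, div_eq_div_iff hd3 (h4 j hjmem)]
          field_simp
        have e6 : Wx j x t / (W j x t - v⁻¹) = -(Wx j x t * v) / (1 - W j x t * v) := by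
          rw [div_eq_div_iff hd4 (h4 j hjmem)]
          field_simp
          ring
        rw [e5, e6] at hfb
        set CC := (1 / 2 : ℂ) * (rx x t / r x t - Wx j x t / W j x t) with hCC
        have h6 : 1 - W j x t * v ≠ 0 := h4 j hjmem
        apply mul_left_cancel₀ (mul_ne_zero h0 h6)
        linear_combination (norm := skip) v * (1 - W j x t * v) ^ 2 * hfb
        have h6' : 1 - v * W j x t ≠ 0 := by rwa [mul_comm]
        field_simp
        ring
      have hL2 : Tendsto (fun v => (rt x t * v + ubart x t +
          ∑ i ∈ Finset.Icc 1 (n+1), abar i * Wbt i x t / (Wb i x t - v)) *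
          (1 - W j x t * v)) (𝓝[≠] (0:ℂ))
          (𝓝 (ubart x t + ∑ l ∈ Finset.Icc 1 (n+1), abar l * Wbt l x t / Wb l x t)) := by
        have h' : Tendsto (fun v => (rt x t * v + ubart x t +
            ∑ i ∈ Finset.Icc 1 (n+1), abar i * Wbt i x t / (Wb i x t - v)) *
            (1 - W j x t * v)) (𝓝[≠] (0:ℂ))
            (𝓝 ((ubart x t + ∑ l ∈ Finset.Icc 1 (n+1), abar l * Wbt l x t / Wb l x t) *
              (1 - W j x t * 0))) :=
          hLT.mul (tendsto_const_nhds.sub (tendsto_const_nhds.mul hid0))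
        simpa using h'
      have hR : Tendsto (fun v => (rx x t * v + ubarx x t +
            ∑ i ∈ Finset.Icc 1 (n+1), abar i * Wbx i x t / (Wb i x t - v))
          - (-(Wx j x t * v) + (1 / 2) * (rx x t / r x t - Wx j x t / W j x t) *
              (1 - W j x t * v)) *
            (v * (-r x t + ∑ i ∈ Finset.Icc 1 (n+1), abar i / (Wb i x t - v))))
          (𝓝[≠] (0:ℂ)) (𝓝 0) := by
        have h' : Tendsto (fun v => (rx x t * v + ubarx x t +
              ∑ i ∈ Finset.Icc 1 (n+1), abar i * Wbx i x t / (Wb i x t - v))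
            - (-(Wx j x t * v) + (1 / 2) * (rx x t / r x t - Wx j x t / W j x t) *
                (1 - W j x t * v)) *
              (v * (-r x t + ∑ i ∈ Finset.Icc 1 (n+1), abar i / (Wb i x t - v))))
            (𝓝[≠] (0:ℂ))
            (𝓝 (0 - (-(Wx j x t * 0) + (1 / 2) * (rx x t / r x t - Wx j x t / W j x t) *
                (1 - W j x t * 0)) *
              (0 * (-r x t + ∑ i ∈ Finset.Icc 1 (n+1), abar i / Wb i x t)))) :=
          hXT0.sub (((tendsto_const_nhds.mul hid0).neg.add
            (tendsto_const_nhds.mul (tendsto_const_nhds.sub (tendsto_const_nhds.mul hid0)))).mul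
            (hid0.mul hYT))
        simpa using h'
      exact limeq hL2 hR evF
  · -- ========== Part 2: the I_k equations, via limits at w = W k ==========
    intro k hk
    have hane : a k ≠ 0 := ha k hk
    have hkne : W k x t ≠ 0 := hW0 k hk x t
    have hWbp : ∀ i ∈ Finset.Icc 1 (n+1), Wb i x t - 1 / W k x t ≠ 0 := by
      intro i hi h
      rw [sub_eq_zero] at h
      exact hWWb k hk i hi x t (by rw [h]; field_simp)
    have hidp : Tendsto (fun w : ℂ => w) (𝓝[≠] W k x t) (𝓝 (W k x t)) :=
      tendsto_id.mono_left nhdsWithin_le_nhds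
    have hqre : ∀ᶠ w in 𝓝[≠] W k x t, w ≠ 0 ∧ (∀ i ∈ Finset.Icc 1 (n+1), w ≠ W i x t) ∧
        (∀ i ∈ Finset.Icc 1 (n+1), w ≠ (Wb i x t)⁻¹) ∧ w - W k x t ≠ 0 := by
      have h1 : ∀ᶠ w in 𝓝[≠] W k x t, w ≠ 0 :=
        (eventually_ne_nhds hkne).filter_mono nhdsWithin_le_nhds
      have h2 : ∀ᶠ w in 𝓝[≠] W k x t, ∀ i ∈ Finset.Icc 1 (n+1), w ≠ W i x t := by
        rw [Filter.eventually_all_finset]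
        intro i hi
        rcases eq_or_ne (W i x t) (W k x t) with h | h
        · rw [h]; exact eventually_mem_nhdsWithin
        · exact (eventually_ne_nhds (Ne.symm h)).filter_mono nhdsWithin_le_nhds
      have h3 : ∀ᶠ w in 𝓝[≠] W k x t, ∀ i ∈ Finset.Icc 1 (n+1), w ≠ (Wb i x t)⁻¹ := by
        rw [Filter.eventually_all_finset]
        intro i hi
        refine (eventually_ne_nhds ?_).filter_mono nhdsWithin_le_nhds
        intro h
        exact hWWb k hk i hi x t (by rw [h]; exact inv_mul_cancel₀ (hWb0 i hi x t))
      have h4 : ∀ᶠ w in 𝓝[≠] W k x t, w ≠ W k x t := eventually_mem_nhdsWithin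
      filter_upwards [h1, h2, h3, h4] with w hw1 hw2 hw3 hw4
      exact ⟨hw1, hw2, hw3, sub_ne_zero.mpr hw4⟩
    -- splittings of the rational functions at the pole w = W k
    have hZwsplit : ∀ w : ℂ, Zw x t w = a k / (w - W k x t) +
        (r x t + ∑ i ∈ (Finset.Icc 1 (n+1)).erase k, a i / (w - W i x t)) := by
      intro w
      rw [hZw, ← Finset.add_sum_erase _ _ hk]
      ring
    have hZxsplit : ∀ w : ℂ, Zx x t w = -(a k * Wx k x t) / (w - W k x t) +
        (rx x t * w + ux x t +
          ∑ i ∈ (Finset.Icc 1 (n+1)).erase k, a i * Wx i x t / (W i x t - w)) := by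
      intro w
      rw [hZx, ← Finset.add_sum_erase _ _ hk,
        show W k x t - w = -(w - W k x t) by ring, div_neg, neg_div]
      ring
    have hLzsplit : ∀ w : ℂ, rt x t * w + ut x t +
        ∑ i ∈ Finset.Icc 1 (n+1), a i * Wt i x t / (W i x t - w)
        = -(a k * Wt k x t) / (w - W k x t) + (rt x t * w + ut x t +
          ∑ i ∈ (Finset.Icc 1 (n+1)).erase k, a i * Wt i x t / (W i x t - w)) := by
      intro w
      rw [← Finset.add_sum_erase _ (fun i => a i * Wt i x t / (W i x t - w)) hk,
        show W k x t - w = -(w - W k x t) by ring, div_neg, neg_div]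
      ring
    -- limits of the regular parts
    have hALim : Tendsto (fun w => r x t +
        ∑ i ∈ (Finset.Icc 1 (n+1)).erase k, a i / (w - W i x t)) (𝓝[≠] W k x t)
        (𝓝 (r x t + ∑ i ∈ (Finset.Icc 1 (n+1)).erase k, a i / (W k x t - W i x t))) :=
      tendsto_const_nhds.add (tendsto_finset_sum _ fun i hi =>
        tendsto_const_nhds.div (hidp.sub tendsto_const_nhds)
          (sub_ne_zero.mpr (hWdist k hk i (Finset.mem_of_mem_erase hi)
            (Ne.symm (Finset.ne_of_mem_erase hi)) x t)))
    have hBLim : Tendsto (fun w => rx x t * w + ux x t +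
        ∑ i ∈ (Finset.Icc 1 (n+1)).erase k, a i * Wx i x t / (W i x t - w)) (𝓝[≠] W k x t)
        (𝓝 (rx x t * W k x t + ux x t +
          ∑ i ∈ (Finset.Icc 1 (n+1)).erase k, a i * Wx i x t / (W i x t - W k x t))) :=
      ((tendsto_const_nhds.mul hidp).add tendsto_const_nhds).add
        (tendsto_finset_sum _ fun i hi =>
          tendsto_const_nhds.div (tendsto_const_nhds.sub hidp)
            (sub_ne_zero.mpr (hWdist i (Finset.mem_of_mem_erase hi) k hk
              (Finset.ne_of_mem_erase hi) x t)))
    have hCLim : Tendsto (fun w => rt x t * w + ut x t +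
        ∑ i ∈ (Finset.Icc 1 (n+1)).erase k, a i * Wt i x t / (W i x t - w)) (𝓝[≠] W k x t)
        (𝓝 (rt x t * W k x t + ut x t +
          ∑ i ∈ (Finset.Icc 1 (n+1)).erase k, a i * Wt i x t / (W i x t - W k x t))) :=
      ((tendsto_const_nhds.mul hidp).add tendsto_const_nhds).add
        (tendsto_finset_sum _ fun i hi =>
          tendsto_const_nhds.div (tendsto_const_nhds.sub hidp)
            (sub_ne_zero.mpr (hWdist i (Finset.mem_of_mem_erase hi) k hk
              (Finset.ne_of_mem_erase hi) x t)))
    have hZbxT : Tendsto (fun w => Zbx x t w) (𝓝[≠] W k x t)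
        (𝓝 (rx x t / W k x t + ubarx x t +
          ∑ i ∈ Finset.Icc 1 (n+1), abar i * Wbx i x t / (Wb i x t - 1 / W k x t))) := by
      simp only [hZbx]
      exact ((tendsto_const_nhds.div hidp hkne).add tendsto_const_nhds).add
        (tendsto_finset_sum _ fun i hi =>
          tendsto_const_nhds.div
            (tendsto_const_nhds.sub (tendsto_const_nhds.div hidp hkne)) (hWbp i hi))
    have hZbwT : Tendsto (fun w => Zbw x t w) (𝓝[≠] W k x t)
        (𝓝 (-r x t / W k x t ^ 2 +
          ∑ i ∈ Finset.Icc 1 (n+1), abar i / (W k x t ^ 2 * (Wb i x t - 1 / W k x t)))) := by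
      simp only [hZbw]
      exact (tendsto_const_nhds.div (hidp.pow 2) (pow_ne_zero 2 hkne)).add
        (tendsto_finset_sum _ fun i hi =>
          tendsto_const_nhds.div
            ((hidp.pow 2).mul
              (tendsto_const_nhds.sub (tendsto_const_nhds.div hidp hkne)))
            (mul_ne_zero (pow_ne_zero 2 hkne) (hWbp i hi)))
    have hLzbT : Tendsto (fun w => rt x t / w + ubart x t +
        ∑ i ∈ Finset.Icc 1 (n+1), abar i * Wbt i x t / (Wb i x t - 1 / w)) (𝓝[≠] W k x t)
        (𝓝 (rt x t / W k x t + ubart x t +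
          ∑ i ∈ Finset.Icc 1 (n+1), abar i * Wbt i x t / (Wb i x t - 1 / W k x t))) :=
      ((tendsto_const_nhds.div hidp hkne).add tendsto_const_nhds).add
        (tendsto_finset_sum _ fun i hi =>
          tendsto_const_nhds.div
            (tendsto_const_nhds.sub (tendsto_const_nhds.div hidp hkne)) (hWbp i hi))
    -- limits of (w - W k) times the singular quantities
    have hZwP : Tendsto (fun w => (w - W k x t) * Zw x t w) (𝓝[≠] W k x t) (𝓝 (a k)) := by
      have h1 : ∀ᶠ w in 𝓝[≠] W k x t,
          (w - W k x t) * (r x t + ∑ i ∈ (Finset.Icc 1 (n+1)).erase k, a i / (w - W i x t))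
            + a k = (w - W k x t) * Zw x t w := by
        filter_upwards [hqre] with w hw
        obtain ⟨hw0, hwW, hwWb, hwp⟩ := hw
        rw [hZwsplit w]
        field_simp
        ring
      have h2 : Tendsto (fun w => (w - W k x t) * (r x t +
          ∑ i ∈ (Finset.Icc 1 (n+1)).erase k, a i / (w - W i x t)) + a k) (𝓝[≠] W k x t)
          (𝓝 ((W k x t - W k x t) * (r x t +
            ∑ i ∈ (Finset.Icc 1 (n+1)).erase k, a i / (W k x t - W i x t)) + a k)) :=
        ((hidp.sub tendsto_const_nhds).mul hALim).add tendsto_const_nhds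
      have h3 := h2.congr' h1
      simpa using h3
    have hZxP : Tendsto (fun w => (w - W k x t) * Zx x t w) (𝓝[≠] W k x t)
        (𝓝 (-(a k * Wx k x t))) := by
      have h1 : ∀ᶠ w in 𝓝[≠] W k x t,
          (w - W k x t) * (rx x t * w + ux x t +
            ∑ i ∈ (Finset.Icc 1 (n+1)).erase k, a i * Wx i x t / (W i x t - w))
            + -(a k * Wx k x t) = (w - W k x t) * Zx x t w := by
        filter_upwards [hqre] with w hw
        obtain ⟨hw0, hwW, hwWb, hwp⟩ := hw
        rw [hZxsplit w]
        field_simp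
        ring
      have h2 : Tendsto (fun w => (w - W k x t) * (rx x t * w + ux x t +
          ∑ i ∈ (Finset.Icc 1 (n+1)).erase k, a i * Wx i x t / (W i x t - w))
          + -(a k * Wx k x t)) (𝓝[≠] W k x t)
          (𝓝 ((W k x t - W k x t) * (rx x t * W k x t + ux x t +
            ∑ i ∈ (Finset.Icc 1 (n+1)).erase k, a i * Wx i x t / (W i x t - W k x t))
            + -(a k * Wx k x t))) :=
        ((hidp.sub tendsto_const_nhds).mul hBLim).add tendsto_const_nhds
      have h3 := h2.congr' h1
      simpa using h3
    have hLzP : Tendsto (fun w => (w - W k x t) * (rt x t * w + ut x t +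
        ∑ i ∈ Finset.Icc 1 (n+1), a i * Wt i x t / (W i x t - w))) (𝓝[≠] W k x t)
        (𝓝 (-(a k * Wt k x t))) := by
      have h1 : ∀ᶠ w in 𝓝[≠] W k x t,
          (w - W k x t) * (rt x t * w + ut x t +
            ∑ i ∈ (Finset.Icc 1 (n+1)).erase k, a i * Wt i x t / (W i x t - w))
            + -(a k * Wt k x t) = (w - W k x t) * (rt x t * w + ut x t +
            ∑ i ∈ Finset.Icc 1 (n+1), a i * Wt i x t / (W i x t - w)) := by
        filter_upwards [hqre] with w hw
        obtain ⟨hw0, hwW, hwWb, hwp⟩ := hw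
        rw [hLzsplit w]
        field_simp
        ring
      have h2 : Tendsto (fun w => (w - W k x t) * (rt x t * w + ut x t +
          ∑ i ∈ (Finset.Icc 1 (n+1)).erase k, a i * Wt i x t / (W i x t - w))
          + -(a k * Wt k x t)) (𝓝[≠] W k x t)
          (𝓝 ((W k x t - W k x t) * (rt x t * W k x t + ut x t +
            ∑ i ∈ (Finset.Icc 1 (n+1)).erase k, a i * Wt i x t / (W i x t - W k x t))
            + -(a k * Wt k x t))) :=
        ((hidp.sub tendsto_const_nhds).mul hCLim).add tendsto_const_nhds
      have h3 := h2.congr' h1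
      simpa using h3
    -- the string-equation consequence: Zbx + Wx_k·Zbw vanishes at W k
    have evE3 : ∀ᶠ w in 𝓝[≠] W k x t,
        w * (a k * (Zbx x t w + Wx k x t * Zbw x t w))
        = (w - W k x t) * (1 - w * (r x t +
            ∑ i ∈ (Finset.Icc 1 (n+1)).erase k, a i / (w - W i x t)) * Zbx x t w
          + w * (rx x t * w + ux x t +
            ∑ i ∈ (Finset.Icc 1 (n+1)).erase k, a i * Wx i x t / (W i x t - w)) * Zbw x t w) := by
      filter_upwards [hqre] with w hw
      obtain ⟨hw0, hwW, hwWb, hwp⟩ := hw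
      have hs := hstring x t w hw0 hwW hwWb
      rw [hZwsplit w, hZxsplit w] at hs
      set SA := r x t + ∑ i ∈ (Finset.Icc 1 (n+1)).erase k, a i / (w - W i x t) with hSA
      set SB := rx x t * w + ux x t +
        ∑ i ∈ (Finset.Icc 1 (n+1)).erase k, a i * Wx i x t / (W i x t - w) with hSB
      field_simp at hs
      linear_combination hs
    have hT1 : Tendsto (fun w => w * (a k * (Zbx x t w + Wx k x t * Zbw x t w)))
        (𝓝[≠] W k x t)
        (𝓝 (W k x t * (a k * ((rx x t / W k x t + ubarx x t +
          ∑ i ∈ Finset.Icc 1 (n+1), abar i * Wbx i x t / (Wb i x t - 1 / W k x t))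
          + Wx k x t * (-r x t / W k x t ^ 2 +
          ∑ i ∈ Finset.Icc 1 (n+1), abar i / (W k x t ^ 2 * (Wb i x t - 1 / W k x t))))))) :=
      hidp.mul (tendsto_const_nhds.mul (hZbxT.add (tendsto_const_nhds.mul hZbwT)))
    have hT2 : Tendsto (fun w => (w - W k x t) * (1 - w * (r x t +
          ∑ i ∈ (Finset.Icc 1 (n+1)).erase k, a i / (w - W i x t)) * Zbx x t w
        + w * (rx x t * w + ux x t +
          ∑ i ∈ (Finset.Icc 1 (n+1)).erase k, a i * Wx i x t / (W i x t - w)) * Zbw x t w))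
        (𝓝[≠] W k x t)
        (𝓝 ((W k x t - W k x t) * (1 - W k x t * (r x t +
            ∑ i ∈ (Finset.Icc 1 (n+1)).erase k, a i / (W k x t - W i x t)) *
            (rx x t / W k x t + ubarx x t +
            ∑ i ∈ Finset.Icc 1 (n+1), abar i * Wbx i x t / (Wb i x t - 1 / W k x t))
          + W k x t * (rx x t * W k x t + ux x t +
            ∑ i ∈ (Finset.Icc 1 (n+1)).erase k, a i * Wx i x t / (W i x t - W k x t)) *
            (-r x t / W k x t ^ 2 +
            ∑ i ∈ Finset.Icc 1 (n+1), abar i / (W k x t ^ 2 * (Wb i x t - 1 / W k x t)))))) :=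
      (hidp.sub tendsto_const_nhds).mul
        ((tendsto_const_nhds.sub ((hidp.mul hALim).mul hZbxT)).add
          ((hidp.mul hBLim).mul hZbwT))
    have hE3 := limeq hT1 hT2 evE3
    rw [sub_self, zero_mul] at hE3
    have hgP : (rx x t / W k x t + ubarx x t +
        ∑ i ∈ Finset.Icc 1 (n+1), abar i * Wbx i x t / (Wb i x t - 1 / W k x t))
        + Wx k x t * (-r x t / W k x t ^ 2 +
        ∑ i ∈ Finset.Icc 1 (n+1), abar i / (W k x t ^ 2 * (Wb i x t - 1 / W k x t))) = 0 := by
      rcases mul_eq_zero.mp hE3 with h | h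
      · exact absurd h hkne
      rcases mul_eq_zero.mp h with h | h
      · exact absurd h hane
      · exact h
    -- reduce the goal to a statement about the limit values
    have hsum : ∑ l ∈ Finset.Icc 1 (n+1),
        abar l * (Wbt l x t + Wt k x t / W k x t ^ 2) / (Wb l x t - 1 / W k x t)
        = (∑ l ∈ Finset.Icc 1 (n+1), abar l * Wbt l x t / (Wb l x t - 1 / W k x t))
          + Wt k x t * ∑ l ∈ Finset.Icc 1 (n+1),
              abar l / (W k x t ^ 2 * (Wb l x t - 1 / W k x t)) := by
      rw [Finset.mul_sum, ← Finset.sum_add_distrib]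
      refine Finset.sum_congr rfl fun i hi => ?_
      have h1 := hWbp i hi
      set D := Wb i x t - 1 / W k x t with hD
      field_simp
    suffices hSf : a k * ((rt x t / W k x t + ubart x t +
        ∑ i ∈ Finset.Icc 1 (n+1), abar i * Wbt i x t / (Wb i x t - 1 / W k x t))
        + Wt k x t * (-r x t / W k x t ^ 2 +
        ∑ i ∈ Finset.Icc 1 (n+1), abar i / (W k x t ^ 2 * (Wb i x t - 1 / W k x t))))
        = if j = k then 1 else 0 by
      rw [hsum]
      rw [← hSf]
      ring
    by_cases hjk : j = k
    · -- j = k : the flow moves I_k at unit speed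
      subst hjk
      rw [if_pos rfl]
      have hk0 : j ≠ 0 := by
        have := (Finset.mem_Icc.mp hk).1
        omega
      have hFw' : ∀ w : ℂ, Fw x t w = (w - W j x t)⁻¹ := fun w => by rw [hFw, if_neg hk0]
      have hFx' : ∀ w : ℂ, Fx x t w = -(Wx j x t) / (w - W j x t) +
          1 / 2 * (rx x t / r x t - Wx j x t / W j x t) := by
        intro w
        rw [hFx, if_neg hk0, show W j x t - w = -(w - W j x t) by ring, div_neg, neg_div]
      have evE1 : ∀ᶠ w in 𝓝[≠] W j x t,
          (w - W j x t) * (rt x t * w + ut x t +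
            ∑ i ∈ Finset.Icc 1 (n+1), a i * Wt i x t / (W i x t - w))
          = w * ((rx x t * w + ux x t +
              ∑ i ∈ (Finset.Icc 1 (n+1)).erase j, a i * Wx i x t / (W i x t - w))
            + Wx j x t * (r x t +
              ∑ i ∈ (Finset.Icc 1 (n+1)).erase j, a i / (w - W i x t)))
            - 1 / 2 * (rx x t / r x t - Wx j x t / W j x t) * w *
              ((w - W j x t) * Zw x t w) := by
        filter_upwards [hqre] with w hw
        obtain ⟨hw0, hwW, hwWb, hwp⟩ := hw
        have hfz := hflowz x t w hw0 hwW hwWb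
        rw [hFw', hFx', hZxsplit w] at hfz
        rw [hfz, hZwsplit w]
        set SA := r x t + ∑ i ∈ (Finset.Icc 1 (n+1)).erase j, a i / (w - W i x t) with hSA
        set SB := rx x t * w + ux x t +
          ∑ i ∈ (Finset.Icc 1 (n+1)).erase j, a i * Wx i x t / (W i x t - w) with hSB
        set CC := 1 / 2 * (rx x t / r x t - Wx j x t / W j x t) with hCC
        field_simp
        ring
      have hT3 : Tendsto (fun w => w * ((rx x t * w + ux x t +
            ∑ i ∈ (Finset.Icc 1 (n+1)).erase j, a i * Wx i x t / (W i x t - w))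
          + Wx j x t * (r x t +
            ∑ i ∈ (Finset.Icc 1 (n+1)).erase j, a i / (w - W i x t)))
          - 1 / 2 * (rx x t / r x t - Wx j x t / W j x t) * w *
            ((w - W j x t) * Zw x t w)) (𝓝[≠] W j x t)
          (𝓝 (W j x t * ((rx x t * W j x t + ux x t +
            ∑ i ∈ (Finset.Icc 1 (n+1)).erase j, a i * Wx i x t / (W i x t - W j x t))
          + Wx j x t * (r x t +
            ∑ i ∈ (Finset.Icc 1 (n+1)).erase j, a i / (W j x t - W i x t)))
          - 1 / 2 * (rx x t / r x t - Wx j x t / W j x t) * W j x t * a j)) :=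
        (hidp.mul (hBLim.add (tendsto_const_nhds.mul hALim))).sub
          ((tendsto_const_nhds.mul hidp).mul hZwP)
      have hE1 := limeq hLzP hT3 evE1
      have evE2 : ∀ᶠ w in 𝓝[≠] W j x t,
          a j * (rt x t / w + ubart x t +
            ∑ i ∈ Finset.Icc 1 (n+1), abar i * Wbt i x t / (Wb i x t - 1 / w))
          = 1 - w * (r x t +
              ∑ i ∈ (Finset.Icc 1 (n+1)).erase j, a i / (w - W i x t)) * Zbx x t w
            + w * (rx x t * w + ux x t +
              ∑ i ∈ (Finset.Icc 1 (n+1)).erase j, a i * Wx i x t / (W i x t - w)) * Zbw x t w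
            - a j * (1 / 2 * (rx x t / r x t - Wx j x t / W j x t)) * w * Zbw x t w := by
        filter_upwards [hqre] with w hw
        obtain ⟨hw0, hwW, hwWb, hwp⟩ := hw
        have hfb := hflowzbar x t w hw0 hwW hwWb
        have hs := hstring x t w hw0 hwW hwWb
        rw [hFw', hFx'] at hfb
        rw [hZwsplit w, hZxsplit w] at hs
        rw [hfb]
        set SA := r x t + ∑ i ∈ (Finset.Icc 1 (n+1)).erase j, a i / (w - W i x t) with hSA
        set SB := rx x t * w + ux x t +
          ∑ i ∈ (Finset.Icc 1 (n+1)).erase j, a i * Wx i x t / (W i x t - w) with hSB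
        set CC := 1 / 2 * (rx x t / r x t - Wx j x t / W j x t) with hCC
        field_simp at hs ⊢
        linear_combination hs
      have hT4 : Tendsto (fun w => a j * (rt x t / w + ubart x t +
          ∑ i ∈ Finset.Icc 1 (n+1), abar i * Wbt i x t / (Wb i x t - 1 / w)))
          (𝓝[≠] W j x t)
          (𝓝 (a j * (rt x t / W j x t + ubart x t +
            ∑ i ∈ Finset.Icc 1 (n+1), abar i * Wbt i x t / (Wb i x t - 1 / W j x t)))) :=
        tendsto_const_nhds.mul hLzbT
      have hT5 : Tendsto (fun w => 1 - w * (r x t +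
            ∑ i ∈ (Finset.Icc 1 (n+1)).erase j, a i / (w - W i x t)) * Zbx x t w
          + w * (rx x t * w + ux x t +
            ∑ i ∈ (Finset.Icc 1 (n+1)).erase j, a i * Wx i x t / (W i x t - w)) * Zbw x t w
          - a j * (1 / 2 * (rx x t / r x t - Wx j x t / W j x t)) * w * Zbw x t w)
          (𝓝[≠] W j x t)
          (𝓝 (1 - W j x t * (r x t +
            ∑ i ∈ (Finset.Icc 1 (n+1)).erase j, a i / (W j x t - W i x t)) *
            (rx x t / W j x t + ubarx x t +
            ∑ i ∈ Finset.Icc 1 (n+1), abar i * Wbx i x t / (Wb i x t - 1 / W j x t))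
          + W j x t * (rx x t * W j x t + ux x t +
            ∑ i ∈ (Finset.Icc 1 (n+1)).erase j, a i * Wx i x t / (W i x t - W j x t)) *
            (-r x t / W j x t ^ 2 +
            ∑ i ∈ Finset.Icc 1 (n+1), abar i / (W j x t ^ 2 * (Wb i x t - 1 / W j x t)))
          - a j * (1 / 2 * (rx x t / r x t - Wx j x t / W j x t)) * W j x t *
            (-r x t / W j x t ^ 2 +
            ∑ i ∈ Finset.Icc 1 (n+1), abar i / (W j x t ^ 2 * (Wb i x t - 1 / W j x t))))) :=
        (((tendsto_const_nhds.sub ((hidp.mul hALim).mul hZbxT)).add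
          ((hidp.mul hBLim).mul hZbwT)).sub
          ((tendsto_const_nhds.mul hidp).mul hZbwT))
      have hE2 := limeq hT4 hT5 evE2
      linear_combination hE2 - (-r x t / W j x t ^ 2 +
        ∑ i ∈ Finset.Icc 1 (n+1), abar i / (W j x t ^ 2 * (Wb i x t - 1 / W j x t))) * hE1
        - W j x t * (r x t +
          ∑ i ∈ (Finset.Icc 1 (n+1)).erase j, a i / (W j x t - W i x t)) * hgP
    · -- j ≠ k : the flow fixes I_k
      rw [if_neg hjk]
      obtain ⟨FWP, FXP, hFwT, hFxT⟩ : ∃ c1 c2 : ℂ,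
          Tendsto (fun w => Fw x t w) (𝓝[≠] W k x t) (𝓝 c1) ∧
          Tendsto (fun w => Fx x t w) (𝓝[≠] W k x t) (𝓝 c2) := by
        by_cases hj0 : j = 0
        · refine ⟨r x t, rx x t * W k x t + ux x t / 2, ?_, ?_⟩
          · simp only [hFw, if_pos hj0]; exact tendsto_const_nhds
          · simp only [hFx, if_pos hj0]
            exact (tendsto_const_nhds.mul hidp).add tendsto_const_nhds
        · have hjmem : j ∈ Finset.Icc 1 (n+1) :=
            Finset.mem_Icc.mpr ⟨Nat.one_le_iff_ne_zero.mpr hj0, hj⟩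
          have hne1 : W k x t - W j x t ≠ 0 :=
            sub_ne_zero.mpr (hWdist k hk j hjmem (fun h => hjk h.symm) x t)
          have hne2 : W j x t - W k x t ≠ 0 := fun h => hne1 (by linear_combination -h)
          refine ⟨(W k x t - W j x t)⁻¹,
            Wx j x t / (W j x t - W k x t) + 1 / 2 * (rx x t / r x t - Wx j x t / W j x t),
            ?_, ?_⟩
          · simp only [hFw, if_neg hj0]
            exact (hidp.sub tendsto_const_nhds).inv₀ hne1
          · simp only [hFx, if_neg hj0]
            exact (tendsto_const_nhds.div (tendsto_const_nhds.sub hidp) hne2).add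
              tendsto_const_nhds
      have evE1 : ∀ᶠ w in 𝓝[≠] W k x t,
          (w - W k x t) * (rt x t * w + ut x t +
            ∑ i ∈ Finset.Icc 1 (n+1), a i * Wt i x t / (W i x t - w))
          = w * Fw x t w * ((w - W k x t) * Zx x t w)
            - w * Fx x t w * ((w - W k x t) * Zw x t w) := by
        filter_upwards [hqre] with w hw
        obtain ⟨hw0, hwW, hwWb, hwp⟩ := hw
        linear_combination (w - W k x t) * hflowz x t w hw0 hwW hwWb
      have hT3 : Tendsto (fun w => w * Fw x t w * ((w - W k x t) * Zx x t w)
          - w * Fx x t w * ((w - W k x t) * Zw x t w)) (𝓝[≠] W k x t)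
          (𝓝 (W k x t * FWP * -(a k * Wx k x t) - W k x t * FXP * a k)) :=
        ((hidp.mul hFwT).mul hZxP).sub ((hidp.mul hFxT).mul hZwP)
      have hE1 := limeq hLzP hT3 evE1
      have evE2 : ∀ᶠ w in 𝓝[≠] W k x t,
          rt x t / w + ubart x t +
            ∑ i ∈ Finset.Icc 1 (n+1), abar i * Wbt i x t / (Wb i x t - 1 / w)
          = w * Fw x t w * Zbx x t w - w * Fx x t w * Zbw x t w := by
        filter_upwards [hqre] with w hw
        obtain ⟨hw0, hwW, hwWb, hwp⟩ := hw
        exact hflowzbar x t w hw0 hwW hwWb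
      have hT4 : Tendsto (fun w => w * Fw x t w * Zbx x t w - w * Fx x t w * Zbw x t w)
          (𝓝[≠] W k x t)
          (𝓝 (W k x t * FWP * (rx x t / W k x t + ubarx x t +
            ∑ i ∈ Finset.Icc 1 (n+1), abar i * Wbx i x t / (Wb i x t - 1 / W k x t))
          - W k x t * FXP * (-r x t / W k x t ^ 2 +
            ∑ i ∈ Finset.Icc 1 (n+1), abar i / (W k x t ^ 2 * (Wb i x t - 1 / W k x t))))) :=
        ((hidp.mul hFwT).mul hZbxT).sub ((hidp.mul hFxT).mul hZbwT)
      have hE2 := limeq hLzbT hT4 evE2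
      linear_combination a k * hE2 - (-r x t / W k x t ^ 2 +
          ∑ i ∈ Finset.Icc 1 (n+1), abar i / (W k x t ^ 2 * (Wb i x t - 1 / W k x t))) * hE1
        + a k * W k x t * FWP * hgP
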